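/- Let N, K be positive natural numbers, η > 0, let H_S^(r) be an N×N complex Hermitian matrix, and let g_j > 0, γ_j > 0, ε_j ∈ ℝ for j = 1,…,K. Let H_eff^η be the (K+1)N × (K+1)N block matrix whose (0,0) block is (1 + iη/2)^{−1} H_S^(r), whose (0,j) block is (1 + iη/2)^{−1} g_j I_N, whose (j,0) block is g_j I_N, whose (j,j) block is (ε_j − i γ_j/2) I_N for j = 1,…,K, and whose remaining blocks are zero. Then the optical potential V = (i/2)(H_eff^η − (H_eff^η)†) is positive semidefinite if and only if H_S^(r) − (η/4)(Σ_{j=1}^K g_j²/γ_j) I_N is positive semidefinite, i.e. if and only if every eigenvalue E_α of H_S^(r) satisfies E_α ≥ (η/4) Σ_{j=1}^K g_j²/γ_j. -/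

import Mathlib

open Matrix
open scoped ComplexOrder

lemma myPosSemidef_smul {n : Type*} [Fintype n] {c : ℝ} (hc : 0 ≤ c)
    {M : Matrix n n ℂ} (hM : M.PosSemidef) : ((c : ℂ) • M).PosSemidef := by
  rw [Matrix.posSemidef_iff_dotProduct_mulVec] at hM ⊢
  constructor
  · rw [Matrix.IsHermitian, Matrix.conjTranspose_smul, hM.1.eq]
    simp [Complex.conj_ofReal]
  · intro x
    rw [Matrix.smul_mulVec, dotProduct_smul, smul_eq_mul]
    exact mul_nonneg (Complex.zero_le_real.mpr hc) (hM.2 x)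

lemma myPosSemidef_smul_iff {n : Type*} [Fintype n] {c : ℝ} (hc : 0 < c)
    (M : Matrix n n ℂ) : ((c : ℂ) • M).PosSemidef ↔ M.PosSemidef := by
  constructor
  · intro h
    have := myPosSemidef_smul (c := c⁻¹) (by positivity) h
    rwa [smul_smul, ← Complex.ofReal_mul, inv_mul_cancel₀ hc.ne', Complex.ofReal_one,
      one_smul] at this
  · exact myPosSemidef_smul hc.le

lemma myPsd_sub_smul_one_iff {n : Type*} [Fintype n] [DecidableEq n]
    {A : Matrix n n ℂ} (hA : A.IsHermitian) (r : ℝ) :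
    (A - (r : ℂ) • (1 : Matrix n n ℂ)).PosSemidef ↔ ∀ i, r ≤ hA.eigenvalues i := by
  constructor
  · intro h i
    set v : n → ℂ := ⇑(hA.eigenvectorBasis i) with hv
    have hv1 : dotProduct (star v) v = 1 := by
      have h1 : ‖hA.eigenvectorBasis i‖ = 1 := hA.eigenvectorBasis.orthonormal.1 i
      have h2 := EuclideanSpace.inner_eq_star_dotProduct (𝕜 := ℂ)
        (hA.eigenvectorBasis i) (hA.eigenvectorBasis i)
      rw [inner_self_eq_norm_sq_to_K, h1] at h2
      simpa [dotProduct_comm] using h2.symm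
    have h3 : (A - (r : ℂ) • 1) *ᵥ v = ((hA.eigenvalues i - r : ℝ) : ℂ) • v := by
      rw [Matrix.sub_mulVec, Matrix.smul_mulVec, Matrix.one_mulVec,
        hA.mulVec_eigenvectorBasis,
        show ((hA.eigenvalues i - r : ℝ) : ℂ) = ((hA.eigenvalues i : ℝ) : ℂ) - (r : ℂ) by
          push_cast; ring, sub_smul]
      congr 1
    have h2 := h.dotProduct_mulVec_nonneg v
    rw [h3, dotProduct_smul, hv1, smul_eq_mul, mul_one] at h2
    have := Complex.zero_le_real.mp h2
    linarith
  · intro h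
    have hU : (hA.eigenvectorUnitary : Matrix n n ℂ) * (hA.eigenvectorUnitary : Matrix n n ℂ)ᴴ
        = 1 := by
      simpa [Matrix.star_eq_conjTranspose] using
        Matrix.mem_unitaryGroup_iff.mp hA.eigenvectorUnitary.2
    have key : A - (r : ℂ) • (1 : Matrix n n ℂ)
        = (hA.eigenvectorUnitary : Matrix n n ℂ)
          * Matrix.diagonal (fun i => ((hA.eigenvalues i - r : ℝ) : ℂ))
          * (hA.eigenvectorUnitary : Matrix n n ℂ)ᴴ := by
      have hdiag : Matrix.diagonal (fun i => ((hA.eigenvalues i - r : ℝ) : ℂ))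
          = Matrix.diagonal (RCLike.ofReal ∘ hA.eigenvalues) - (r : ℂ) • 1 := by
        ext i j
        rcases eq_or_ne i j with rfl | hij
        · simp [Matrix.sub_apply, Matrix.smul_apply, Matrix.one_apply_eq,
            Matrix.diagonal_apply_eq]
        · simp [Matrix.sub_apply, Matrix.smul_apply, Matrix.one_apply_ne hij,
            Matrix.diagonal_apply_ne _ hij]
      conv_lhs => rw [hA.spectral_theorem, Unitary.conjStarAlgAut_apply]
      rw [hdiag, Matrix.mul_sub, Matrix.sub_mul, Matrix.mul_smul, Matrix.smul_mul,
        Matrix.star_eq_conjTranspose, Matrix.mul_one, hU]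
    rw [key]
    exact (Matrix.posSemidef_diagonal_iff.mpr fun i =>
      Complex.zero_le_real.mpr (by linarith [h i])).mul_mul_conjTranspose_same _


/-- The effective non-Hermitian Hamiltonian `H_eff^η` with renormalized Ohmic contribution:
the `(K+1)N × (K+1)N` block matrix whose `(0,0)` block is `(1 + iη/2)⁻¹ H_S^(r)`, whose
`(0,j)` block is `(1 + iη/2)⁻¹ g_j I_N`, whose `(j,0)` block is `g_j I_N`, whose `(j,j)`
block is `(ε_j − i γ_j/2) I_N`, and whose remaining blocks are zero. -/
noncomputable def HeffEta (N K : ℕ) (η : ℝ) (HS : Matrix (Fin N) (Fin N) ℂ)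
    (g γ ε : Fin K → ℝ) :
    Matrix (Fin N ⊕ Fin K × Fin N) (Fin N ⊕ Fin K × Fin N) ℂ :=
  Matrix.fromBlocks ((1 + Complex.I * (η : ℂ) / 2)⁻¹ • HS)
    (fun a p => if a = p.2 then (1 + Complex.I * (η : ℂ) / 2)⁻¹ * (g p.1 : ℂ) else 0)
    (fun p a => if p.2 = a then (g p.1 : ℂ) else 0)
    (fun p q => if p = q then (ε p.1 : ℂ) - Complex.I * ((γ p.1 : ℂ) / 2) else 0)

/-- The optical potential `V = (i/2)(H_eff^η − (H_eff^η)†)` is positive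
semidefinite if and only if `H_S^(r) − (η/4)(Σ_j g_j²/γ_j) I_N` is positive semidefinite,
i.e. iff every eigenvalue `E_α` of `H_S^(r)` satisfies `E_α ≥ (η/4) Σ_j g_j²/γ_j`. -/
theorem markovian_dilation_condition_ohmic_plus_lorentz
    (N K : ℕ) (hN : 0 < N) (hK : 0 < K) (η : ℝ) (hη : 0 < η)
    (HS : Matrix (Fin N) (Fin N) ℂ) (hHS : HS.IsHermitian)
    (g γ ε : Fin K → ℝ) (hg : ∀ j, 0 < g j) (hγ : ∀ j, 0 < γ j)
    (V : Matrix (Fin N ⊕ Fin K × Fin N) (Fin N ⊕ Fin K × Fin N) ℂ)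
    (hV : V = (Complex.I / 2) • (HeffEta N K η HS g γ ε - (HeffEta N K η HS g γ ε)ᴴ)) :
    (V.PosSemidef ↔
      (HS - (((η / 4) * ∑ j, (g j) ^ 2 / (γ j) : ℝ) : ℂ) •
        (1 : Matrix (Fin N) (Fin N) ℂ)).PosSemidef) ∧
    (V.PosSemidef ↔
      ∀ α : Fin N, (η / 4) * ∑ j, (g j) ^ 2 / (γ j) ≤ hHS.eigenvalues α) := by
  have hd : (0:ℝ) < 1 + η ^ 2 / 4 := by positivity
  set d : ℝ := 1 + η ^ 2 / 4 with hd_def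
  have hdC : (d : ℂ) ≠ 0 := by exact_mod_cast hd.ne'
  have hdcast : (d : ℂ) = 1 + (η : ℂ) ^ 2 / 4 := by rw [hd_def]; push_cast; ring
  set w : ℂ := 1 + Complex.I * (η : ℂ) / 2 with hw_def
  have hwmul : w * (1 - Complex.I * (η : ℂ) / 2) = (d : ℂ) := by
    rw [hw_def, hdcast]; linear_combination (-(η:ℂ)^2/4) * Complex.I_sq
  have hw : w ≠ 0 := fun h0 => hdC (by rw [h0, zero_mul] at hwmul; exact hwmul.symm)
  have hinv : w⁻¹ = (1 - Complex.I * (η:ℂ)/2) / (d:ℂ) := by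
    refine inv_eq_of_mul_eq_one_right ?_
    rw [← mul_div_assoc, hwmul, div_self hdC]
  have hconj : (starRingEnd ℂ) w⁻¹ = (1 + Complex.I * (η:ℂ)/2) / (d:ℂ) := by
    rw [hinv]
    simp only [map_div₀, map_sub, _root_.map_mul, _root_.map_one, Complex.conj_I,
      Complex.conj_ofReal, Complex.conj_ofNat]
    ring
  have hc2 : (starRingEnd ℂ) (2:ℂ) = 2 := by
    rw [show (2:ℂ) = ((2:ℝ):ℂ) by norm_num, Complex.conj_ofReal]
  set s : ℝ := η / (2 * d) with hs_def
  have hs : 0 < s := by positivity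
  set r : ℝ := (η / 4) * ∑ j, (g j) ^ 2 / (γ j) with hr_def
  set bC : Fin K → ℂ := fun j => Complex.I / 2 * ((w⁻¹ - 1) * (g j : ℂ)) with hbC
  set B : Matrix (Fin N) (Fin K × Fin N) ℂ :=
    (fun a p => if a = p.2 then bC p.1 else 0) with hB
  set D : Matrix (Fin K × Fin N) (Fin K × Fin N) ℂ :=
    Matrix.diagonal (fun p => ((γ p.1 / 2 : ℝ) : ℂ)) with hD_def
  have hHSc : ∀ a b, (starRingEnd ℂ) (HS b a) = HS a b := fun a b => hHS.apply a b
  have hs1 : Complex.I / 2 * (w⁻¹ - (starRingEnd ℂ) w⁻¹) = ((s : ℝ) : ℂ) := by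
    rw [hconj, hinv, hs_def]
    push_cast
    field_simp
    ring_nf
    rw [Complex.I_sq]
    ring
  have hVeq : V = Matrix.fromBlocks (((s : ℝ) : ℂ) • HS) B Bᴴ D := by
    rw [hV]
    ext i j
    rcases i with a | p <;> rcases j with b | q
    · simp only [Matrix.smul_apply, Matrix.sub_apply, Matrix.conjTranspose_apply,
        HeffEta, Matrix.fromBlocks, Matrix.of_apply, Sum.elim_inl, Sum.elim_inr, Matrix.fromBlocks_apply₁₁, Matrix.fromBlocks_apply₁₂,
        Matrix.fromBlocks_apply₂₁, Matrix.fromBlocks_apply₂₂, smul_eq_mul, ← hw_def]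
      rw [Complex.star_def, _root_.map_mul, hHSc a b]
      calc Complex.I / 2 * (w⁻¹ * HS a b - (starRingEnd ℂ) w⁻¹ * HS a b)
          = Complex.I / 2 * (w⁻¹ - (starRingEnd ℂ) w⁻¹) * HS a b := by ring
        _ = ((s:ℝ):ℂ) * HS a b := by rw [hs1]
    · simp only [Matrix.smul_apply, Matrix.sub_apply, Matrix.conjTranspose_apply,
        HeffEta, Matrix.fromBlocks, Matrix.of_apply, Sum.elim_inl, Sum.elim_inr, Matrix.fromBlocks_apply₁₁, Matrix.fromBlocks_apply₁₂,
        Matrix.fromBlocks_apply₂₁, Matrix.fromBlocks_apply₂₂, smul_eq_mul, ← hw_def, hB]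
      rcases eq_or_ne a q.2 with rfl | hne
      · simp only [eq_self_iff_true, if_true, Complex.star_def, Complex.conj_ofReal, hbC]
        ring
      · simp [hne, Ne.symm hne]
    · simp only [Matrix.smul_apply, Matrix.sub_apply, Matrix.conjTranspose_apply,
        HeffEta, Matrix.fromBlocks, Matrix.of_apply, Sum.elim_inl, Sum.elim_inr, Matrix.fromBlocks_apply₁₁, Matrix.fromBlocks_apply₁₂,
        Matrix.fromBlocks_apply₂₁, Matrix.fromBlocks_apply₂₂, smul_eq_mul, ← hw_def, hB]
      change _ = star (if b = p.2 then bC p.1 else 0)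
      rcases eq_or_ne p.2 b with rfl | hne
      · simp only [eq_self_iff_true, if_true, hbC, Complex.star_def, map_sub, _root_.map_mul,
          _root_.map_one, map_div₀, Complex.conj_I, Complex.conj_ofReal, hc2]
        ring
      · simp [hne, Ne.symm hne]
    · simp only [Matrix.smul_apply, Matrix.sub_apply, Matrix.conjTranspose_apply,
        HeffEta, Matrix.fromBlocks, Matrix.of_apply, Sum.elim_inl, Sum.elim_inr, Matrix.fromBlocks_apply₁₁, Matrix.fromBlocks_apply₁₂,
        Matrix.fromBlocks_apply₂₁, Matrix.fromBlocks_apply₂₂, smul_eq_mul, hD_def]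
      rcases eq_or_ne p q with rfl | hne
      · simp only [eq_self_iff_true, if_true, Matrix.diagonal_apply_eq, Complex.star_def,
          map_sub, _root_.map_mul, map_div₀, Complex.conj_I, Complex.conj_ofReal, hc2]
        push_cast
        linear_combination (-(γ p.1 : ℂ)/2) * Complex.I_sq
      · simp [hne, Ne.symm hne, Matrix.diagonal_apply_ne _ hne]
  have hDpos : D.PosDef := by
    rw [hD_def]
    exact Matrix.posDef_diagonal_iff.mpr fun p =>
      Complex.zero_lt_real.mpr (by have := hγ p.1; positivity)
  have hright : D * Matrix.diagonal (fun p : Fin K × Fin N => ((2 / γ p.1 : ℝ) : ℂ)) = 1 := by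
    rw [hD_def, Matrix.diagonal_mul_diagonal]
    ext p q
    rcases eq_or_ne p q with rfl | hpq
    · have h : (γ p.1 : ℂ) ≠ 0 := by exact_mod_cast (hγ p.1).ne'
      rw [Matrix.diagonal_apply_eq, Matrix.one_apply_eq]
      push_cast
      field_simp
    · rw [Matrix.diagonal_apply_ne _ hpq, Matrix.one_apply_ne hpq]
  haveI : Invertible D := invertibleOfRightInverse D _ hright
  have hDinv : D⁻¹ = Matrix.diagonal (fun p : Fin K × Fin N => ((2 / γ p.1 : ℝ) : ℂ)) :=
    Matrix.inv_eq_right_inv hright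
  have hprod : (w⁻¹ - 1) * ((starRingEnd ℂ) w⁻¹ - 1) = ((η^2/(4*d) : ℝ) : ℂ) := by
    rw [hconj, hinv]
    field_simp
    push_cast
    field_simp
    linear_combination (-(4:ℂ) * (η:ℂ)^2) * Complex.I_sq
      + (16*(((d:ℝ):ℂ)-1)) * hdcast
  have hbb : ∀ j, bC j * star (bC j) * ((2 / γ j : ℝ) : ℂ)
      = ((s * ((η/4) * (g j ^ 2 / γ j)) : ℝ) : ℂ) := by
    intro j
    have hγj : (γ j : ℂ) ≠ 0 := by exact_mod_cast (hγ j).ne'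
    have hstar : star (bC j) = -Complex.I / 2 * (((starRingEnd ℂ) w⁻¹ - 1) * (g j : ℂ)) := by
      simp only [hbC, Complex.star_def, _root_.map_mul, map_sub, map_div₀, _root_.map_one,
        Complex.conj_I, Complex.conj_ofReal, hc2]
      try ring
    rw [hstar]
    simp only [hbC]
    calc Complex.I / 2 * ((w⁻¹ - 1) * (g j : ℂ))
          * (-Complex.I / 2 * (((starRingEnd ℂ) w⁻¹ - 1) * (g j : ℂ))) * ((2 / γ j : ℝ) : ℂ)
        = -(Complex.I^2)/4 * ((w⁻¹ - 1) * ((starRingEnd ℂ) w⁻¹ - 1)) * (g j : ℂ)^2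
          * ((2 / γ j : ℝ) : ℂ) := by ring
      _ = ((s * ((η/4) * (g j ^ 2 / γ j)) : ℝ) : ℂ) := by
        rw [Complex.I_sq, hprod, hs_def]
        have hdC2 : (d : ℂ) ≠ 0 := hdC
        push_cast
        field_simp
        ring
  have hSchur : (((s : ℝ) : ℂ) • HS - B * D⁻¹ * Bᴴ)
      = ((s : ℝ) : ℂ) • (HS - ((r : ℝ) : ℂ) • (1 : Matrix (Fin N) (Fin N) ℂ)) := by
    rw [hDinv]
    ext a b
    have hmul : (B * Matrix.diagonal (fun p : Fin K × Fin N => ((2 / γ p.1 : ℝ) : ℂ)) * Bᴴ) a b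
        = ∑ p : Fin K × Fin N, B a p * ((2 / γ p.1 : ℝ) : ℂ) * star (B b p) := by
      rw [Matrix.mul_apply]
      refine Finset.sum_congr rfl fun p _ => ?_
      rw [Matrix.mul_diagonal, Matrix.conjTranspose_apply]
    have hsum : ∑ p : Fin K × Fin N, B a p * ((2 / γ p.1 : ℝ) : ℂ) * star (B b p)
        = if a = b then ((s * r : ℝ) : ℂ) else 0 := by
      rw [hB]
      simp only
      rw [Fintype.sum_prod_type_right]
      rcases eq_or_ne a b with rfl | hne
      · rw [Finset.sum_eq_single a]
        · simp only [eq_self_iff_true, if_true]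
          rw [hr_def]
          push_cast [Finset.mul_sum]
          refine Finset.sum_congr rfl fun j _ => ?_
          have := hbb j
          push_cast at this
          linear_combination this
        · intro c _ hc
          simp [Ne.symm hc]
        · simp
      · rw [if_neg hne]
        apply Finset.sum_eq_zero
        intro c _
        apply Finset.sum_eq_zero
        intro j _
        rcases eq_or_ne a c with rfl | hac
        · rw [if_neg (Ne.symm hne)]
          simp
        · rw [if_neg hac]
          simp
    rw [Matrix.sub_apply, Matrix.smul_apply, Matrix.smul_apply, Matrix.sub_apply,
      Matrix.smul_apply, hmul, hsum]
    rcases eq_or_ne a b with rfl | hne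
    · rw [if_pos rfl, Matrix.one_apply_eq]
      simp only [smul_eq_mul]
      push_cast
      ring
    · rw [if_neg hne, Matrix.one_apply_ne hne]
      simp only [smul_eq_mul]
      ring
  rw [hVeq, Matrix.PosDef.fromBlocks₂₂ _ _ hDpos, hSchur, myPosSemidef_smul_iff hs]
  exact ⟨Iff.rfl, myPsd_sub_smul_one_iff hHS r⟩
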